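/- Let q_1 be the unique root in (1,2) of x^6 - x^4 - x^3 - 2x^2 - x - 1 = 0, with y_3 = Π(0 1^3 (10)^∞) and z_3 = Π(1 0^3 (01)^∞), and T_0(x) = q_1 x, T_1(x) = q_1 x - 1. Then T_0(T_1(y_3)) = z_3 and T_1(T_0(z_3)) = y_3. -/

import Mathlib

/-- `y q j = Π(0 1^j (10)^∞)`: digit 0, then j ones, then (10) repeated. -/
noncomputable def yExp (q : ℝ) (j : ℕ) : ℝ :=
  ∑' i : ℕ, (if i = 0 then (0:ℝ) else if i ≤ j then 1
    else if (i - (j + 1)) % 2 = 0 then 1 else 0) / q ^ (i + 1)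

/-- `z q j = Π(1 0^j (01)^∞)`: digit 1, then j zeros, then (01) repeated. -/
noncomputable def zExp (q : ℝ) (j : ℕ) : ℝ :=
  ∑' i : ℕ, (if i = 0 then (1:ℝ) else if i ≤ j then 0
    else if (i - (j + 1)) % 2 = 0 then 0 else 1) / q ^ (i + 1)

lemma tail_sum (q : ℝ) (hq : 1 < q) (m : ℕ) :
    ∑' k : ℕ, 1 / q ^ (2 * k + m) = q ^ 2 / (q ^ m * (q ^ 2 - 1)) := by
  have hq0 : (0:ℝ) < q := by linarith
  have hq2 : (1:ℝ) < q ^ 2 := one_lt_pow₀ hq (by norm_num)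
  have hlt : 1 / q ^ 2 < 1 := by
    rw [div_lt_one (by positivity)]; exact hq2
  have h : ∀ k : ℕ, 1 / q ^ (2 * k + m) = (1 / q ^ m) * (1 / q ^ 2) ^ k := by
    intro k
    rw [pow_add, pow_mul]
    field_simp
    rw [← mul_pow, mul_one_div_cancel (ne_of_gt (pow_pos hq0 2)), one_pow]
  rw [tsum_congr h, tsum_mul_left, tsum_geometric_of_lt_one (by positivity) hlt]
  have h1 : q ^ 2 - 1 ≠ 0 := by nlinarith
  have h2 : (1:ℝ) - 1 / q ^ 2 ≠ 0 := by
    have : (1:ℝ) - 1 / q ^ 2 = (q ^ 2 - 1) / q ^ 2 := by field_simp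
    rw [this]
    positivity
  field_simp

lemma parity_tail_sum (q : ℝ) (hq : 1 < q) (d : ℕ → ℝ) (r : ℕ) (hr : 4 ≤ r)
    (hd : ∀ i, d i = if r ≤ i ∧ i % 2 = r % 2 then 1 / q ^ (i + 1) else 0) :
    Summable d ∧ ∑' i, d i = q ^ 2 / (q ^ (r + 1) * (q ^ 2 - 1)) := by
  have hq0 : (0:ℝ) < q := by linarith
  have hlt : 1 / q < 1 := by rw [div_lt_one hq0]; exact hq
  have hnn : ∀ i, 0 ≤ d i := fun i => by rw [hd]; positivity
  have hle : ∀ i, d i ≤ (1 / q) ^ i := by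
    intro i
    rw [hd]
    split_ifs
    · rw [one_div, one_div, ← inv_pow]
      apply pow_le_pow_of_le_one (by positivity) (by rw [inv_le_one_iff₀]; right; linarith) (by omega)
    · positivity
  have hg : Summable (fun i : ℕ => (1 / q) ^ i) :=
    summable_geometric_of_lt_one (by positivity) hlt
  have hsum : Summable d := Summable.of_nonneg_of_le hnn hle hg
  refine ⟨hsum, ?_⟩
  have hinj : Function.Injective (fun k : ℕ => 2 * k + r) := by
    intro a b hab; dsimp at hab; omega
  rw [← Function.Injective.tsum_eq hinj (f := d) ?_]
  · have : ∀ k : ℕ, d (2 * k + r) = 1 / q ^ (2 * k + (r + 1)) := by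
      intro k
      rw [hd]
      rw [if_pos ⟨by omega, by omega⟩]
      ring_nf
    rw [tsum_congr this, tail_sum q hq (r + 1)]
  · intro x hx
    rw [Function.mem_support] at hx
    have hP : r ≤ x ∧ x % 2 = r % 2 := by
      by_contra h
      rw [hd, if_neg h] at hx
      exact hx rfl
    exact ⟨(x - r) / 2, by dsimp; omega⟩

lemma yExp3 (q : ℝ) (hq : 1 < q) :
    yExp q 3 = 1/q^2 + 1/q^3 + 1/q^4 + q^2/(q^5*(q^2-1)) := by
  set d : ℕ → ℝ := fun i => if 4 ≤ i ∧ i % 2 = 4 % 2 then 1/q^(i+1) else 0 with hdDef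
  obtain ⟨hds, hdt⟩ := parity_tail_sum q hq d 4 le_rfl (fun i => rfl)
  set c : ℕ → ℝ := fun i => if 1 ≤ i ∧ i ≤ 3 then 1/q^(i+1) else 0 with hcDef
  have hcs : Summable c :=
    summable_of_ne_finset_zero (s := Finset.range 4) (fun i hi => by
      simp only [hcDef, Finset.mem_range] at *
      rw [if_neg (by omega)])
  have hpt : ∀ i : ℕ, (if i = 0 then (0:ℝ) else if i ≤ 3 then 1
      else if (i - (3 + 1)) % 2 = 0 then 1 else 0) / q ^ (i + 1) = c i + d i := by
    intro i
    simp only [hcDef, hdDef]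
    split_ifs <;> (first | ring1 | (exfalso; omega))
  have hct : ∑' i, c i = ∑ i ∈ Finset.range 4, c i :=
    tsum_eq_sum (fun i hi => by
      simp only [hcDef, Finset.mem_range] at *
      rw [if_neg (by omega)])
  rw [yExp, tsum_congr hpt, Summable.tsum_add hcs hds, hdt, hct]
  simp only [hcDef, Finset.sum_range_succ, Finset.sum_range_zero]
  norm_num

lemma zExp3 (q : ℝ) (hq : 1 < q) :
    zExp q 3 = 1/q + q^2/(q^6*(q^2-1)) := by
  set d : ℕ → ℝ := fun i => if 5 ≤ i ∧ i % 2 = 5 % 2 then 1/q^(i+1) else 0 with hdDef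
  obtain ⟨hds, hdt⟩ := parity_tail_sum q hq d 5 (by norm_num) (fun i => rfl)
  set c : ℕ → ℝ := fun i => if i = 0 then 1/q^(i+1) else 0 with hcDef
  have hcs : Summable c :=
    summable_of_ne_finset_zero (s := Finset.range 1) (fun i hi => by
      simp only [hcDef, Finset.mem_range] at *
      rw [if_neg (by omega)])
  have hpt : ∀ i : ℕ, (if i = 0 then (1:ℝ) else if i ≤ 3 then 0
      else if (i - (3 + 1)) % 2 = 0 then 0 else 1) / q ^ (i + 1) = c i + d i := by
    intro i
    simp only [hcDef, hdDef]
    split_ifs <;> (first | ring1 | (exfalso; omega))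
  have hct : ∑' i, c i = ∑ i ∈ Finset.range 1, c i :=
    tsum_eq_sum (fun i hi => by
      simp only [hcDef, Finset.mem_range] at *
      rw [if_neg (by omega)])
  rw [zExp, tsum_congr hpt, Summable.tsum_add hcs hds, hdt, hct]
  simp only [hcDef, Finset.sum_range_succ, Finset.sum_range_zero]
  norm_num

theorem y3_z3_cycle (q1 : ℝ)
    (hq1 : q1 ∈ Set.Ioo (1:ℝ) 2 ∧ q1^6 - q1^4 - q1^3 - 2*q1^2 - q1 - 1 = 0)
    (hq1u : ∀ q : ℝ, q ∈ Set.Ioo (1:ℝ) 2 → q^6 - q^4 - q^3 - 2*q^2 - q - 1 = 0 → q = q1) :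
    q1 * (q1 * yExp q1 3 - 1) = zExp q1 3 ∧
    q1 * (q1 * zExp q1 3) - 1 = yExp q1 3 := by
  obtain ⟨⟨h1, h2⟩, heq⟩ := hq1
  have hq0 : (0:ℝ) < q1 := by linarith
  have hne : q1 ≠ 0 := ne_of_gt hq0
  have hne2 : q1 ^ 2 - 1 ≠ 0 := by nlinarith
  rw [yExp3 q1 h1, zExp3 q1 h1]
  constructor
  · field_simp
    linear_combination (1 - q1) * heq
  · field_simp
    linear_combination (q1 - 1) * heq
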